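/- Let Λ ∈ ℝ^{n×n} be Metzler and Hurwitz, let F̄ ∈ ℝ^{n×n} have nonnegative entries, and set R = −Λ⁻¹ F̄. If ρ(R) < 1, then Λ + F̄ is Hurwitz. -/

import Mathlib

open Matrix

namespace SumHurwitzAux

attribute [local instance] Matrix.linftyOpNormedRing Matrix.linftyOpNormedAlgebra

variable {n : ℕ}

abbrev Mat (n : ℕ) := Matrix (Fin n) (Fin n) ℝ

def NN (A : Mat n) : Prop := ∀ i j, 0 ≤ A i j

lemma NN.mul {A B : Mat n} (hA : NN A) (hB : NN B) : NN (A * B) := by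
  intro i j
  rw [Matrix.mul_apply]
  exact Finset.sum_nonneg fun k _ => mul_nonneg (hA i k) (hB k j)

lemma NN.pow {A : Mat n} (hA : NN A) : ∀ k, NN (A ^ k)
  | 0 => by
      intro i j
      rcases eq_or_ne i j with h | h <;> simp [pow_zero, Matrix.one_apply, h]
  | (k + 1) => by rw [pow_succ]; exact (NN.pow hA k).mul hA

lemma NN.smul {c : ℝ} (hc : 0 ≤ c) {A : Mat n} (hA : NN A) : NN (c • A) := fun i j => by
  rw [Matrix.smul_apply, smul_eq_mul]
  exact mul_nonneg hc (hA i j)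

lemma NN.mulVec_mono {A : Mat n} (hA : NN A) {u v : Fin n → ℝ} (h : ∀ i, u i ≤ v i) :
    ∀ i, A.mulVec u i ≤ A.mulVec v i := by
  intro i
  simp only [Matrix.mulVec, dotProduct]
  exact Finset.sum_le_sum fun k _ => mul_le_mul_of_nonneg_left (h k) (hA i k)

noncomputable def entryLM (i j : Fin n) : Mat n →ₗ[ℝ] ℝ where
  toFun A := A i j
  map_add' _ _ := rfl
  map_smul' _ _ := rfl

lemma continuous_entry (i j : Fin n) : Continuous fun A : Mat n => A i j :=
  (entryLM i j).continuous_of_finiteDimensional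

lemma NN.inv_one_sub {X : Mat n} (hX : NN X) (h : ‖X‖ < 1) :
    NN ((1 - X)⁻¹) ∧ (1 - X) * (1 - X)⁻¹ = 1 := by
  haveI : CompleteSpace (Mat n) := FiniteDimensional.complete ℝ _
  have hs : Summable fun k : ℕ => X ^ k := summable_geometric_of_norm_lt_one h
  have hmul : (1 - X) * ∑' k : ℕ, X ^ k = 1 := mul_neg_geom_series X h
  have hinv : (1 - X)⁻¹ = ∑' k : ℕ, X ^ k := Matrix.inv_eq_right_inv hmul
  constructor
  · intro i j
    rw [hinv]
    have hmap : (∑' k : ℕ, X ^ k) i j = ∑' k : ℕ, (X ^ k) i j :=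
      (LinearMap.toContinuousLinearMap (entryLM i j)).map_tsum hs
    rw [hmap]
    exact tsum_nonneg fun k => hX.pow k i j
  · rw [hinv]; exact hmul

/-- Key lemma: if `N ⪰ 0` and `t • 1 - N` is invertible for every `t ≥ a`, then
`(a • 1 - N)⁻¹ ⪰ 0`. -/
lemma key {N : Mat n} (hN : NN N) {a : ℝ}
    (hU : ∀ t, a ≤ t → IsUnit (t • (1 : Mat n) - N)) :
    NN ((a • (1 : Mat n) - N)⁻¹) := by
  haveI : CompleteSpace (Mat n) := FiniteDimensional.complete ℝ _
  set M : ℝ → Mat n := fun t => t • (1 : Mat n) - N with hM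
  set g : ℝ → Mat n := fun t => (M t)⁻¹ with hg
  have hdet : ∀ t, a ≤ t → IsUnit (M t).det := fun t ht =>
    (Matrix.isUnit_iff_isUnit_det _).mp (hU t ht)
  have hMg : ∀ t, a ≤ t → M t * g t = 1 := fun t ht => Matrix.mul_nonsing_inv _ (hdet t ht)
  -- base point
  set b : ℝ := max a (‖N‖ + 1) with hb
  have hab : a ≤ b := le_max_left _ _
  have hNb : ‖N‖ < b := lt_of_lt_of_le (by linarith) (le_max_right a (‖N‖ + 1))
  have hb0 : (0 : ℝ) < b := lt_of_le_of_lt (norm_nonneg N) hNb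
  have hXb : ‖b⁻¹ • N‖ < 1 := by
    rw [norm_smul, norm_inv, Real.norm_eq_abs, abs_of_pos hb0]
    rw [inv_mul_lt_iff₀ hb0, mul_one]
    exact hNb
  have hbfac : M b = b • ((1 : Mat n) - b⁻¹ • N) := by
    rw [smul_sub, smul_smul, mul_inv_cancel₀ hb0.ne', one_smul]
  have hPb : NN (g b) := by
    obtain ⟨hNN1, hmul1⟩ := NN.inv_one_sub (NN.smul (inv_nonneg.mpr hb0.le) hN) hXb
    have : M b * (b⁻¹ • ((1 : Mat n) - b⁻¹ • N)⁻¹) = 1 := by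
      rw [hbfac, smul_mul_assoc, mul_smul_comm, smul_smul, mul_inv_cancel₀ hb0.ne', one_smul,
        hmul1]
    have hgb : g b = b⁻¹ • ((1 : Mat n) - b⁻¹ • N)⁻¹ := Matrix.inv_eq_right_inv this
    rw [hgb]
    exact NN.smul (inv_nonneg.mpr hb0.le) hNN1
  -- step lemma
  have step : ∀ t u, a ≤ t → t ≤ u → a ≤ u → NN (g u) → (u - t) * ‖g u‖ < 1 → NN (g t) := by
    intro t u hat htu hau hNNu hsmall
    set X : Mat n := (u - t) • g u with hX
    have hXnn : NN X := NN.smul (sub_nonneg.mpr htu) hNNu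
    have hXnorm : ‖X‖ < 1 := by
      rw [hX, norm_smul, Real.norm_eq_abs, abs_of_nonneg (sub_nonneg.mpr htu)]
      exact hsmall
    obtain ⟨hNN1, hmul1⟩ := NN.inv_one_sub hXnn hXnorm
    have hfac : M t = M u * ((1 : Mat n) - X) := by
      have h1 : M u * X = (u - t) • (1 : Mat n) := by
        rw [hX, mul_smul_comm, hMg u hau]
      rw [mul_sub, mul_one, h1]
      show t • (1 : Mat n) - N = (u • 1 - N) - (u - t) • 1
      rw [sub_right_comm, ← sub_smul, sub_sub_cancel]
    have hright : M t * (((1 : Mat n) - X)⁻¹ * g u) = 1 := by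
      rw [hfac, mul_assoc, ← mul_assoc ((1 : Mat n) - X), hmul1, one_mul, hMg u hau]
    have : g t = ((1 : Mat n) - X)⁻¹ * g u := Matrix.inv_eq_right_inv hright
    rw [this]
    exact hNN1.mul hNNu
  -- continuity of g on [a, ∞)
  have hgcont : ∀ t, a ≤ t → ContinuousAt g t := by
    intro t ht
    have h1 : Continuous M := (continuous_id.smul continuous_const).sub continuous_const
    have h2 : ContinuousAt Ring.inverse (M t) := by
      have := NormedRing.inverse_continuousAt (hU t ht).unit
      rwa [IsUnit.unit_spec] at this
    have h3 : g = fun t => Ring.inverse (M t) :=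
      funext fun t => Matrix.nonsing_inv_eq_ringInverse _
    rw [h3]
    exact h2.comp h1.continuousAt
  -- real-induction via infimum
  set I : Set ℝ := {t | t ∈ Set.Icc a b ∧ ∀ u, t ≤ u → u ≤ b → NN (g u)} with hI
  have hbI : b ∈ I := by
    refine ⟨⟨hab, le_refl b⟩, fun u hu hub => ?_⟩
    have : u = b := le_antisymm hub hu
    rwa [this]
  have hIbdd : BddBelow I := ⟨a, fun t ht => ht.1.1⟩
  have hne : I.Nonempty := ⟨b, hbI⟩
  set m := sInf I with hm
  have hma : a ≤ m := le_csInf hne fun t ht => ht.1.1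
  have hmb : m ≤ b := csInf_le hIbdd hbI
  have hQ : ∀ u, m < u → u ≤ b → NN (g u) := by
    intro u hmu hub
    obtain ⟨t, htI, htu⟩ := exists_lt_of_csInf_lt hne hmu
    exact htI.2 u htu.le hub
  have hPm : NN (g m) := by
    rcases eq_or_lt_of_le hmb with he | hlt
    · rwa [he]
    · intro i j
      have hc : ContinuousAt (fun t => g t i j) m :=
        ((continuous_entry i j).continuousAt).comp (hgcont m hma)
      have hts : Filter.Tendsto (fun t => g t i j) (nhdsWithin m (Set.Ioi m)) (nhds (g m i j)) :=
        hc.tendsto.mono_left nhdsWithin_le_nhds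
      refine ge_of_tendsto hts ?_
      filter_upwards [Ioo_mem_nhdsGT_of_mem ⟨le_refl m, hlt⟩] with u hu
      exact hQ u hu.1 hu.2.le i j
  have hmI : m ∈ I :=
    ⟨⟨hma, hmb⟩, fun u hmu hub =>
      (eq_or_lt_of_le hmu).elim (fun h => h ▸ hPm) fun h => hQ u h hub⟩
  have hmeq : m = a := by
    by_contra hne2
    have ham : a < m := lt_of_le_of_ne hma (Ne.symm hne2)
    set δ : ℝ := (‖g m‖ + 1)⁻¹ with hδ
    have hδ0 : 0 < δ := by positivity
    set t := max a (m - δ) with ht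
    have htm : t < m := max_lt ham (by linarith)
    have hδlt : δ * ‖g m‖ < 1 := by
      rw [hδ, inv_mul_eq_div, div_lt_one (by positivity)]
      linarith
    have hstepall : ∀ t', t ≤ t' → t' ≤ m → NN (g t') := by
      intro t' h1 h2
      refine step t' m (le_trans (le_max_left a _) h1) h2 hma hPm ?_
      have h3 : m - t' ≤ δ := by
        have := le_trans (le_max_right a (m - δ)) h1
        linarith
      calc (m - t') * ‖g m‖ ≤ δ * ‖g m‖ :=
            mul_le_mul_of_nonneg_right h3 (norm_nonneg _)
        _ < 1 := hδlt
    have htI : t ∈ I := by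
      refine ⟨⟨le_max_left _ _, le_trans htm.le hmb⟩, fun u hu hub => ?_⟩
      rcases le_or_gt u m with h | h
      · exact hstepall u hu h
      · exact hQ u h hub
    exact absurd (csInf_le hIbdd htI) (not_le.mpr htm)
  have := hPm
  rwa [hmeq] at this

lemma map_shift (t : ℝ) (A : Mat n) :
    (t • (1 : Mat n) - A).map Complex.ofReal =
      algebraMap ℂ (Matrix (Fin n) (Fin n) ℂ) (t : ℂ) - A.map Complex.ofReal := by
  rw [Algebra.algebraMap_eq_smul_one]
  ext i j
  simp [Matrix.map_apply, Matrix.one_apply, apply_ite Complex.ofReal, smul_eq_mul]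

lemma mem_spectrum_ofReal {A : Mat n} {t : ℝ} (h : ¬ IsUnit (t • (1 : Mat n) - A)) :
    (t : ℂ) ∈ spectrum ℂ (A.map Complex.ofReal) := by
  rw [spectrum.mem_iff]
  intro hu
  apply h
  rw [Matrix.isUnit_iff_isUnit_det, isUnit_iff_ne_zero]
  rw [← map_shift, Matrix.isUnit_iff_isUnit_det, isUnit_iff_ne_zero] at hu
  intro h0
  apply hu
  have := (Complex.ofRealHom : ℝ →+* ℂ).map_det (t • (1 : Mat n) - A)
  rw [h0, map_zero, RingHom.mapMatrix_apply] at this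
  rw [show (Complex.ofReal : ℝ → ℂ) = ⇑Complex.ofRealHom from rfl]
  exact this.symm

lemma exists_eigenvector {A : Matrix (Fin n) (Fin n) ℂ} {μ : ℂ} (h : μ ∈ spectrum ℂ A) :
    ∃ x : Fin n → ℂ, x ≠ 0 ∧ A.mulVec x = μ • x := by
  rw [spectrum.mem_iff, Matrix.isUnit_iff_isUnit_det, isUnit_iff_ne_zero, not_ne_iff] at h
  obtain ⟨x, hx0, hx⟩ := Matrix.exists_mulVec_eq_zero_iff.mpr h
  refine ⟨x, hx0, ?_⟩
  rw [Matrix.sub_mulVec] at hx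
  have h1 : (algebraMap ℂ (Matrix (Fin n) (Fin n) ℂ) μ).mulVec x = μ • x := by
    rw [Algebra.algebraMap_eq_smul_one, Matrix.smul_mulVec, Matrix.one_mulVec]
  rw [h1, sub_eq_zero] at hx
  exact hx.symm

end SumHurwitzAux

open SumHurwitzAux in
/-- If `Λ` is Metzler and Hurwitz, `F̄ ⪰ 0`, and `ρ(−Λ⁻¹ F̄) < 1`, then `Λ + F̄` is Hurwitz. -/
theorem sum_hurwitz_of_spectral_radius_lt_one {n : ℕ} (Λ F : Matrix (Fin n) (Fin n) ℝ)
    (hMetz : ∀ i j, i ≠ j → 0 ≤ Λ i j)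
    (hHur : ∀ μ ∈ spectrum ℂ (Λ.map Complex.ofReal), μ.re < 0)
    (hF : ∀ i j, 0 ≤ F i j)
    (hρ : ∀ μ ∈ spectrum ℂ ((-Λ⁻¹ * F).map Complex.ofReal), ‖μ‖ < 1) :
    ∀ μ ∈ spectrum ℂ ((Λ + F).map Complex.ofReal), μ.re < 0 := by
  classical
  intro μ hμ
  by_contra hre'
  push_neg at hre'
  -- `hre' : 0 ≤ μ.re`
  set s : ℝ := 1 + ∑ i, |Λ i i| with hs
  have hsum_nonneg : (0 : ℝ) ≤ ∑ i, |Λ i i| := Finset.sum_nonneg fun i _ => abs_nonneg _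
  have hsΛ : ∀ i, -Λ i i ≤ s := by
    intro i
    have h1 : |Λ i i| ≤ ∑ k, |Λ k k| :=
      Finset.single_le_sum (f := fun k => |Λ k k|) (fun k _ => abs_nonneg _) (Finset.mem_univ i)
    have h2 := neg_abs_le (Λ i i)
    rw [hs]; linarith
  set N : Mat n := Λ + s • 1 with hN
  have hNnn : NN N := by
    intro i j
    rcases eq_or_ne i j with h | h
    · subst h
      simp only [hN, Matrix.add_apply, Matrix.smul_apply, Matrix.one_apply_eq, smul_eq_mul,
        mul_one]
      linarith [hsΛ i]
    · simp only [hN, Matrix.add_apply, Matrix.smul_apply, Matrix.one_apply_ne h, smul_eq_mul,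
        mul_zero, add_zero]
      exact hMetz i j h
  have hshift : ∀ t : ℝ, t • (1 : Mat n) - N = (t - s) • 1 - Λ := by
    intro t
    rw [hN, sub_smul]
    abel
  have hUnit : ∀ t, s ≤ t → IsUnit (t • (1 : Mat n) - N) := by
    intro t ht
    rw [hshift]
    by_contra h
    have hmem := mem_spectrum_ofReal h
    have := hHur _ hmem
    rw [Complex.ofReal_re] at this
    linarith
  have hG := key hNnn hUnit
  have hsN : s • (1 : Mat n) - N = -Λ := by rw [hshift]; simp
  rw [hsN] at hG
  have hΛunit : IsUnit (-Λ : Mat n) := by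
    have := hUnit s le_rfl; rwa [hsN] at this
  have hΛdet : IsUnit (-Λ : Mat n).det := (Matrix.isUnit_iff_isUnit_det _).mp hΛunit
  have hmulG : (-Λ : Mat n)⁻¹ * (-Λ) = 1 := Matrix.nonsing_inv_mul _ hΛdet
  have hdetΛ : IsUnit Λ.det := by
    rw [isUnit_iff_ne_zero]
    intro h0
    have := hΛdet
    rw [isUnit_iff_ne_zero, Matrix.det_neg, h0, mul_zero] at this
    exact this rfl
  have hGeq : (-Λ : Mat n)⁻¹ = -Λ⁻¹ := by
    have h1 : (-Λ⁻¹ : Mat n) * (-Λ) = 1 := by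
      rw [neg_mul_neg]
      exact Matrix.nonsing_inv_mul _ hdetΛ
    exact Matrix.inv_eq_left_inv h1
  set R0 : Mat n := (-Λ)⁻¹ * F with hR0
  have hFnn : NN F := fun i j => hF i j
  have hR0nn : NN R0 := hG.mul hFnn
  have hR0eq : R0 = -Λ⁻¹ * F := by rw [hR0, hGeq]
  have hUnitR : ∀ t, (1 : ℝ) ≤ t → IsUnit (t • (1 : Mat n) - R0) := by
    intro t ht
    by_contra h
    have hmem := mem_spectrum_ofReal h
    rw [hR0eq] at hmem
    have h1 := hρ _ hmem
    rw [Complex.norm_real, Real.norm_eq_abs] at h1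
    have h2 : (1 : ℝ) ≤ |t| := le_trans ht (le_abs_self t)
    linarith
  have hH := key hR0nn hUnitR
  rw [one_smul] at hH
  have hRunit : IsUnit ((1 : Mat n) - R0) := by
    have := hUnitR 1 le_rfl; rwa [one_smul] at this
  have hRdet := (Matrix.isUnit_iff_isUnit_det _).mp hRunit
  have hHmul : ((1 : Mat n) - R0)⁻¹ * (1 - R0) = 1 := Matrix.nonsing_inv_mul _ hRdet
  -- eigenvector
  obtain ⟨x, hx0, hx⟩ := exists_eigenvector hμ
  set y : Fin n → ℝ := fun i => ‖x i‖ with hy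
  have hy0 : ∀ i, 0 ≤ y i := fun i => norm_nonneg _
  set M0 : Mat n := Λ + F with hM0
  have hMy : ∀ i, μ.re * y i ≤ M0.mulVec y i := by
    intro i
    have hxi : ∑ j, (M0 i j : ℂ) * x j = μ * x i := by
      have := congrFun hx i
      simpa [Matrix.mulVec, dotProduct, Matrix.map_apply, Pi.smul_apply, smul_eq_mul] using this
    have hsplit : (M0 i i : ℂ) * x i + ∑ j ∈ Finset.univ.erase i, (M0 i j : ℂ) * x j
        = μ * x i := by
      rw [← hxi]
      exact Finset.add_sum_erase _ (fun j => (M0 i j : ℂ) * x j) (Finset.mem_univ i)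
    have h1 : (μ - (M0 i i : ℂ)) * x i = ∑ j ∈ Finset.univ.erase i, (M0 i j : ℂ) * x j := by
      linear_combination -hsplit
    have habs : ‖(μ - (M0 i i : ℂ)) * x i‖
        ≤ ∑ j ∈ Finset.univ.erase i, M0 i j * y j := by
      rw [h1]
      refine le_trans (norm_sum_le _ _) (le_of_eq ?_)
      refine Finset.sum_congr rfl fun j hj => ?_
      have hij : i ≠ j := fun hij => (Finset.mem_erase.mp hj).1 hij.symm
      rw [norm_mul, Complex.norm_real, Real.norm_eq_abs,
        abs_of_nonneg (show (0 : ℝ) ≤ M0 i j from add_nonneg (hMetz i j hij) (hF i j))]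
    have h2 : μ.re - M0 i i ≤ ‖μ - (M0 i i : ℂ)‖ := by
      have := Complex.re_le_norm (μ - (M0 i i : ℂ))
      rwa [Complex.sub_re, Complex.ofReal_re] at this
    have h3 : (μ.re - M0 i i) * y i ≤ ‖(μ - (M0 i i : ℂ)) * x i‖ := by
      rw [norm_mul]
      exact mul_le_mul_of_nonneg_right h2 (hy0 i)
    have h4 : M0.mulVec y i = M0 i i * y i + ∑ j ∈ Finset.univ.erase i, M0 i j * y j := by
      simp only [Matrix.mulVec, dotProduct]
      exact (Finset.add_sum_erase _ (fun j => M0 i j * y j) (Finset.mem_univ i)).symm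
    have := le_trans h3 habs
    rw [h4]
    nlinarith [this]
  have hstep1 : ∀ i, (-Λ).mulVec y i ≤ F.mulVec y i := by
    intro i
    have h0 : 0 ≤ M0.mulVec y i := le_trans (mul_nonneg hre' (hy0 i)) (hMy i)
    have hadd : M0.mulVec y i = Λ.mulVec y i + F.mulVec y i := by
      rw [hM0, Matrix.add_mulVec, Pi.add_apply]
    have hneg : (-Λ).mulVec y i = -(Λ.mulVec y i) := by
      rw [Matrix.neg_mulVec, Pi.neg_apply]
    linarith
  have hyR : ∀ i, y i ≤ R0.mulVec y i := by
    intro i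
    have h1 := hG.mulVec_mono hstep1 i
    have h2 : (-Λ : Mat n)⁻¹.mulVec ((-Λ).mulVec y) = y := by
      rw [Matrix.mulVec_mulVec, hmulG, Matrix.one_mulVec]
    have h3 : (-Λ : Mat n)⁻¹.mulVec (F.mulVec y) = R0.mulVec y := by
      rw [Matrix.mulVec_mulVec, hR0]
    rw [h2, h3] at h1
    exact h1
  have hyneg : ∀ i, y i ≤ 0 := by
    have hz : ∀ i, ((1 : Mat n) - R0).mulVec y i ≤ (0 : Fin n → ℝ) i := by
      intro i
      rw [Matrix.sub_mulVec, Pi.sub_apply, Matrix.one_mulVec, Pi.zero_apply]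
      have := hyR i
      linarith
    intro i
    have h4 : ((1 : Mat n) - R0)⁻¹.mulVec (((1 : Mat n) - R0).mulVec y) = y := by
      rw [Matrix.mulVec_mulVec, hHmul, Matrix.one_mulVec]
    have h5 := hH.mulVec_mono hz i
    rw [h4, Matrix.mulVec_zero, Pi.zero_apply] at h5
    exact h5
  obtain ⟨i, hi⟩ : ∃ i, x i ≠ 0 := Function.ne_iff.mp hx0
  have hpos : 0 < y i := norm_pos_iff.mpr hi
  linarith [hyneg i]
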